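/- For 1 ≤ i ≤ n-2 and c ≥ 2, the total number of occurrences of maximal monochromatic runs of length exactly i, summed over all c^n colorings of the path P_n, equals c^{n-1-i}(c-1)((n-i+1)c - (n-i-1)). -/

import Mathlib

/-- The color of vertex `k` (0-indexed) under the coloring `f` of the path `P_n`,
`none` if `k` is out of range. -/
def col {n c : ℕ} (f : Fin n → Fin c) (k : ℕ) : Option (Fin c) :=
  if h : k < n then some (f ⟨k, h⟩) else none

/-- `f` has a maximal monochromatic run of length exactly `i` starting at vertex `s`. -/
def isMaxRun {n c : ℕ} (f : Fin n → Fin c) (s i : ℕ) : Prop :=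
  0 < i ∧ s + i ≤ n ∧ (∀ j < i, col f (s + j) = col f s) ∧
    (s = 0 ∨ col f (s - 1) ≠ col f s) ∧ col f (s + i) ≠ col f s

open Finset

/-- Constraint sets describing a maximal run of length `i` starting at `s` with color `a`. -/
def Tset (n c s i : ℕ) (a : Fin c) (k : Fin n) : Finset (Fin c) :=
  if s ≤ k.1 ∧ k.1 < s + i then {a} else if k.1 + 1 = s ∨ k.1 = s + i then {a}ᶜ else Finset.univ

lemma run_iff {n c s i : ℕ} (hi : 0 < i) (hsn : s + i ≤ n) (f : Fin n → Fin c) :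
    isMaxRun f s i ↔ ∀ k : Fin n, f k ∈ Tset n c s i (f ⟨s, by omega⟩) k := by
  have hs : s < n := by omega
  constructor
  · rintro ⟨-, -, hrun, hleft, hright⟩ k
    rw [Tset]
    split_ifs with h1 h2
    · have := hrun (k.1 - s) (by omega)
      rw [show s + (k.1 - s) = k.1 by omega] at this
      simp only [col, dif_pos k.isLt, dif_pos hs, Fin.eta] at this
      rw [mem_singleton]
      exact Option.some.inj this
    · rw [mem_compl, mem_singleton]
      rcases h2 with h2 | h2
      · rcases hleft with h | h
        · omega
        · rw [show s - 1 = k.1 by omega] at h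
          simp only [col, dif_pos k.isLt, dif_pos hs, Fin.eta] at h
          exact fun hh => h (congrArg some hh)
      · rw [← h2] at hright
        simp only [col, dif_pos k.isLt, dif_pos hs, Fin.eta] at hright
        exact fun hh => hright (congrArg some hh)
    · exact mem_univ _
  · intro h
    refine ⟨hi, hsn, ?_, ?_, ?_⟩
    · intro j hj
      have hk : s + j < n := by omega
      have hmem := h ⟨s + j, hk⟩
      rw [Tset, if_pos (show s ≤ s + j ∧ s + j < s + i by omega), mem_singleton] at hmem
      simp only [col, dif_pos hk, dif_pos hs]
      exact congrArg some hmem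
    · rcases Nat.eq_zero_or_pos s with h0 | h0
      · exact Or.inl h0
      · right
        have hk : s - 1 < n := by omega
        have hmem := h ⟨s - 1, hk⟩
        rw [Tset, if_neg (show ¬(s ≤ s - 1 ∧ s - 1 < s + i) by omega),
          if_pos (show s - 1 + 1 = s ∨ s - 1 = s + i from Or.inl (by omega)),
          mem_compl, mem_singleton] at hmem
        simp only [col, dif_pos hk, dif_pos hs]
        exact fun hh => hmem (Option.some.inj hh)
    · rcases Nat.lt_or_ge (s + i) n with hk | hk
      · have hmem := h ⟨s + i, hk⟩
        rw [Tset, if_neg (show ¬(s ≤ s + i ∧ s + i < s + i) by omega),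
          if_pos (show s + i + 1 = s ∨ s + i = s + i from Or.inr rfl),
          mem_compl, mem_singleton] at hmem
        simp only [col, dif_pos hk, dif_pos hs]
        exact fun hh => hmem (Option.some.inj hh)
      · simp only [col, dif_neg (Nat.not_lt.mpr hk), dif_pos hs]
        exact fun hh => nomatch hh

lemma prod_g (n s i c : ℕ) (hi : 0 < i) (hsn : s + i ≤ n) :
    ∏ k ∈ range n, (if s ≤ k ∧ k < s + i then 1
        else if k + 1 = s ∨ k = s + i then c - 1 else c)
      = (c-1) ^ ((if 0 < s then 1 else 0) + (if s + i < n then 1 else 0)) *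
        c ^ (n - i - ((if 0 < s then 1 else 0) + (if s + i < n then 1 else 0))) := by
  set b : ℕ := (if 0 < s then 1 else 0) + (if s + i < n then 1 else 0) with hb
  rw [← prod_filter_mul_prod_filter_not (range n) (fun k => s ≤ k ∧ k < s + i)]
  have h1 : ∏ k ∈ (range n).filter (fun k => s ≤ k ∧ k < s + i),
      (if s ≤ k ∧ k < s + i then 1 else if k + 1 = s ∨ k = s + i then c - 1 else c) = 1 := by
    apply prod_eq_one
    intro k hk
    simp only [mem_filter] at hk
    rw [if_pos hk.2]
  rw [h1, one_mul]
  have h2 : ∏ k ∈ (range n).filter (fun k => ¬(s ≤ k ∧ k < s + i)),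
      (if s ≤ k ∧ k < s + i then 1 else if k + 1 = s ∨ k = s + i then c - 1 else c)
      = ∏ k ∈ (range n).filter (fun k => ¬(s ≤ k ∧ k < s + i)),
        (if k + 1 = s ∨ k = s + i then c - 1 else c) := by
    apply prod_congr rfl
    intro k hk
    simp only [mem_filter] at hk
    rw [if_neg hk.2]
  rw [h2, ← prod_filter_mul_prod_filter_not _ (fun k => k + 1 = s ∨ k = s + i),
    prod_congr rfl (fun k hk => if_pos (mem_filter.mp hk).2),
    prod_congr rfl (fun k hk => if_neg (mem_filter.mp hk).2),
    prod_const, prod_const]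
  have hcard0 : ((range n).filter (fun k => ¬(s ≤ k ∧ k < s + i))).card = n - i := by
    have : (range n).filter (fun k => ¬(s ≤ k ∧ k < s + i)) = range n \ Ico s (s + i) := by
      ext k
      simp only [mem_filter, mem_range, mem_sdiff, mem_Ico]
    rw [this, card_sdiff_of_subset (by intro k hk; simp at hk ⊢; omega), Nat.card_Ico, card_range]
    omega
  have hcardQ : (((range n).filter (fun k => ¬(s ≤ k ∧ k < s + i))).filter
      (fun k => k + 1 = s ∨ k = s + i)).card = b := by
    rcases Nat.eq_zero_or_pos s with h0 | h0 <;> rcases Nat.lt_or_ge (s + i) n with h3 | h3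
    · have he : ((range n).filter (fun k => ¬(s ≤ k ∧ k < s + i))).filter
          (fun k => k + 1 = s ∨ k = s + i) = {s + i} := by
        ext k; simp; omega
      rw [he, card_singleton, hb, if_neg (by omega), if_pos h3]
    · have he : ((range n).filter (fun k => ¬(s ≤ k ∧ k < s + i))).filter
          (fun k => k + 1 = s ∨ k = s + i) = ∅ := by
        ext k; simp; omega
      rw [he, card_empty, hb, if_neg (by omega), if_neg (by omega)]
    · have he : ((range n).filter (fun k => ¬(s ≤ k ∧ k < s + i))).filter
          (fun k => k + 1 = s ∨ k = s + i) = {s - 1, s + i} := by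
        ext k; simp; omega
      rw [he, card_insert_of_notMem (by simp; omega), card_singleton, hb,
        if_pos h0, if_pos h3]
    · have he : ((range n).filter (fun k => ¬(s ≤ k ∧ k < s + i))).filter
          (fun k => k + 1 = s ∨ k = s + i) = {s - 1} := by
        ext k; simp; omega
      rw [he, card_singleton, hb, if_pos h0, if_neg (by omega)]
  have hcardF : (((range n).filter (fun k => ¬(s ≤ k ∧ k < s + i))).filter
      (fun k => ¬(k + 1 = s ∨ k = s + i))).card = n - i - b := by
    have := Finset.card_filter_add_card_filter_not
      (s := (range n).filter (fun k => ¬(s ≤ k ∧ k < s + i)))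
      (p := fun k => k + 1 = s ∨ k = s + i)
    rw [hcard0, hcardQ] at this
    omega
  rw [hcardQ, hcardF]

open scoped Classical in
lemma count_s (n c s i : ℕ) (hi : 0 < i) (hsn : s + i ≤ n) :
    (Finset.univ.filter (fun f : Fin n → Fin c => isMaxRun f s i)).card
      = c * ((c-1) ^ ((if 0 < s then 1 else 0) + (if s + i < n then 1 else 0)) *
        c ^ (n - i - ((if 0 < s then 1 else 0) + (if s + i < n then 1 else 0)))) := by
  have hs : s < n := by omega
  have key : (Finset.univ.filter (fun f : Fin n → Fin c => isMaxRun f s i))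
      = Finset.univ.biUnion (fun a : Fin c => Fintype.piFinset (Tset n c s i a)) := by
    ext f
    simp only [mem_filter, mem_univ, true_and, mem_biUnion, Fintype.mem_piFinset]
    rw [run_iff hi hsn f]
    constructor
    · intro h; exact ⟨f ⟨s, hs⟩, h⟩
    · rintro ⟨a, ha⟩
      have has : f ⟨s, hs⟩ = a := by
        have := ha ⟨s, hs⟩
        rwa [Tset, if_pos (show s ≤ s ∧ s < s + i by omega), mem_singleton] at this
      subst has
      exact fun k => ha k
  rw [key, card_biUnion]
  · have hterm : ∀ a : Fin c, (Fintype.piFinset (Tset n c s i a)).card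
        = (c-1) ^ ((if 0 < s then 1 else 0) + (if s + i < n then 1 else 0)) *
          c ^ (n - i - ((if 0 < s then 1 else 0) + (if s + i < n then 1 else 0))) := by
      intro a
      rw [Fintype.card_piFinset]
      have hc : ∀ k : Fin n, (Tset n c s i a k).card =
          (if s ≤ k.1 ∧ k.1 < s + i then 1 else if k.1 + 1 = s ∨ k.1 = s + i then c - 1 else c) := by
        intro k
        rw [Tset]
        split_ifs
        · exact card_singleton a
        · rw [card_compl, card_singleton, Fintype.card_fin]
        · rw [card_univ, Fintype.card_fin]
      rw [prod_congr rfl (fun k _ => hc k), Fin.prod_univ_eq_prod_range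
        (fun k => if s ≤ k ∧ k < s + i then 1 else if k + 1 = s ∨ k = s + i then c - 1 else c) n,
        prod_g n s i c hi hsn]
    rw [sum_congr rfl (fun a _ => hterm a), sum_const, card_univ, Fintype.card_fin, smul_eq_mul]
  · intro a _ a' _ haa'
    rw [Function.onFun, Finset.disjoint_left]
    intro f hf hf'
    rw [Fintype.mem_piFinset] at hf hf'
    have h1 := hf ⟨s, hs⟩
    have h2 := hf' ⟨s, hs⟩
    rw [Tset, if_pos (show s ≤ s ∧ s < s + i by omega), mem_singleton] at h1 h2
    exact haa' (h1 ▸ h2)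

open scoped Classical in
theorem stmt5 (n c i : ℕ) (hn : 3 ≤ n) (hc : 2 ≤ c) (hi1 : 1 ≤ i) (hi2 : i ≤ n - 2) :
    (∑ f : Fin n → Fin c, ((Finset.range n).filter (fun s => isMaxRun f s i)).card)
      = c ^ (n - 1 - i) * (c - 1) * ((n - i + 1) * c - (n - i - 1)) := by
  have hswap : (∑ f : Fin n → Fin c, ((Finset.range n).filter (fun s => isMaxRun f s i)).card)
      = ∑ s ∈ range n, (Finset.univ.filter (fun f : Fin n → Fin c => isMaxRun f s i)).card := by
    simp only [card_filter]
    rw [← Finset.sum_comm]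
  rw [hswap]
  obtain ⟨m', hm'⟩ : ∃ m', n - i = m' + 2 := ⟨n - i - 2, by omega⟩
  have hrange : ∑ s ∈ range n, (Finset.univ.filter (fun f : Fin n → Fin c => isMaxRun f s i)).card
      = ∑ s ∈ range (m' + 3), (Finset.univ.filter (fun f : Fin n → Fin c => isMaxRun f s i)).card := by
    symm
    apply Finset.sum_subset
    · intro s hs; simp at hs ⊢; omega
    · intro s hs1 hs2
      simp only [mem_range] at hs1 hs2
      rw [Finset.card_eq_zero]
      ext f
      simp only [mem_filter, notMem_empty, iff_false, not_and]
      intro _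
      rintro ⟨-, h, -⟩
      omega
  rw [hrange, Finset.sum_range_succ, Finset.sum_range_succ']
  have hF0 : (Finset.univ.filter (fun f : Fin n → Fin c => isMaxRun f 0 i)).card
      = c * ((c-1) ^ 1 * c ^ (m' + 1)) := by
    rw [count_s n c 0 i (by omega) (by omega), if_neg (by omega), if_pos (by omega)]
    rw [show n - i - (0 + 1) = m' + 1 by omega]
  have hFm : (Finset.univ.filter (fun f : Fin n → Fin c => isMaxRun f (m' + 2) i)).card
      = c * ((c-1) ^ 1 * c ^ (m' + 1)) := by
    rw [count_s n c (m' + 2) i (by omega) (by omega), if_pos (by omega), if_neg (by omega)]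
    rw [show n - i - (1 + 0) = m' + 1 by omega]
  have hFmid : ∀ j ∈ range (m' + 1),
      (Finset.univ.filter (fun f : Fin n → Fin c => isMaxRun f (j + 1) i)).card
      = c * ((c-1) ^ 2 * c ^ m') := by
    intro j hj
    simp only [mem_range] at hj
    rw [count_s n c (j + 1) i (by omega) (by omega), if_pos (by omega), if_pos (by omega)]
    rw [show n - i - (1 + 1) = m' by omega]
  rw [Finset.sum_congr rfl hFmid, Finset.sum_const, card_range, hF0, hFm, smul_eq_mul]
  obtain ⟨c', rfl⟩ : ∃ c', c = c' + 2 := ⟨c - 2, by omega⟩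
  rw [show c' + 2 - 1 = c' + 1 by omega, show n - 1 - i = m' + 1 by omega,
    show n - i + 1 = m' + 3 by omega, show n - i - 1 = m' + 1 by omega,
    show (m' + 3) * (c' + 2) - (m' + 1) = (m' + 3) * c' + m' + 5 by ring_nf; omega]
  ring
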